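/- arXiv:2011.05549 — 2 statements merged into one kernel-verified Lean document; each statement's English description precedes it below -/
import Mathlib

section
/- Let T be a finite set of tokens, d : T → ℝ≥0, and γ ∈ (0,1]. Define G(S,γ) = Σ_{t∈T} d(t)·log((m_S(t)+γ)/γ) on multisets S over T. Then G is submodular over multisets: for multisets S₁ ⊆ S₂ and any additional multiset q, G(S₁ ⊎ q, γ) − G(S₁, γ) ≥ G(S₂ ⊎ q, γ) − G(S₂, γ), where ⊎ denotes multiset union (addition of multiplicities). -/
open Finset

/-- The smoothed log-count objective, multisets over `T` represented by
multiplicity functions `S : T → ℕ`. -/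
noncomputable def G {T : Type*} [Fintype T] (d : T → ℝ) (S : T → ℕ) (γ : ℝ) : ℝ :=
  ∑ t, d t * Real.log ((S t + γ) / γ)

lemma marginal_mono (γ : ℝ) (hγ0 : 0 < γ) (a b k : ℕ) (hab : a ≤ b) :
    Real.log (((b + k : ℕ) + γ) / γ) - Real.log ((b + γ) / γ) ≤
      Real.log (((a + k : ℕ) + γ) / γ) - Real.log ((a + γ) / γ) := by
  have ha : (0:ℝ) < a + γ := by positivity
  have hb : (0:ℝ) < b + γ := by positivity
  have hak : (0:ℝ) < (a+k:ℕ) + γ := by positivity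
  have hbk : (0:ℝ) < (b+k:ℕ) + γ := by positivity
  rw [Real.log_div (ne_of_gt hbk) (ne_of_gt hγ0), Real.log_div (ne_of_gt hb) (ne_of_gt hγ0),
    Real.log_div (ne_of_gt hak) (ne_of_gt hγ0), Real.log_div (ne_of_gt ha) (ne_of_gt hγ0)]
  have h : Real.log ((b+k:ℕ) + γ) - Real.log (b + γ) ≤
      Real.log ((a+k:ℕ) + γ) - Real.log (a + γ) := by
    rw [← Real.log_div (ne_of_gt hbk) (ne_of_gt hb), ← Real.log_div (ne_of_gt hak) (ne_of_gt ha)]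
    apply Real.log_le_log (by positivity)
    rw [div_le_div_iff₀ hb ha]
    push_cast
    have : (a:ℝ) ≤ b := by exact_mod_cast hab
    nlinarith [Nat.cast_nonneg (α := ℝ) k]
  linarith

theorem G_submodular {T : Type*} [Fintype T]
    (d : T → ℝ) (hd : ∀ t, 0 ≤ d t)
    (γ : ℝ) (hγ0 : 0 < γ) (hγ1 : γ ≤ 1)
    (S₁ S₂ q : T → ℕ) (hsub : ∀ t, S₁ t ≤ S₂ t) :
    G d (fun t => S₂ t + q t) γ - G d S₂ γ ≤
      G d (fun t => S₁ t + q t) γ - G d S₁ γ := by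
  unfold G
  rw [← Finset.sum_sub_distrib, ← Finset.sum_sub_distrib]
  apply Finset.sum_le_sum
  intro t _
  rw [← mul_sub, ← mul_sub]
  exact mul_le_mul_of_nonneg_left (marginal_mono γ hγ0 (S₁ t) (S₂ t) (q t) (hsub t)) (hd t)
end

section
/- Let T be a finite set of tokens, and let S₁, S₂ be multisets over T such that the support of S₁ is strictly contained in the support of S₂ (every token appearing in S₁ appears in S₂, and some token appears in S₂ but not in S₁). Let d : T → ℝ>0 be a strictly positive probability distribution on T, and define G(S,γ) = Σ_{t∈T} d(t)·log((m_S(t)+γ)/γ). Then there exists ε > 0 such that for all γ ∈ (0, ε), G(S₁,γ) < G(S₂,γ). -/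
open Finset

theorem G_prefers_larger_support {T : Type*} [Fintype T]
    (d : T → ℝ) (hd : ∀ t, 0 < d t) (hsum : ∑ t, d t = 1)
    (S₁ S₂ : T → ℕ)
    (hsupp : {t | 0 < S₁ t} ⊂ {t | 0 < S₂ t}) :
    ∃ ε > (0 : ℝ), ∀ γ : ℝ, 0 < γ → γ < ε → G d S₁ γ < G d S₂ γ := by
  classical
  obtain ⟨hsub, hne⟩ := hsupp
  obtain ⟨t₀, ht₀₂, ht₀₁⟩ : ∃ t, 0 < S₂ t ∧ ¬ 0 < S₁ t := by
    by_contra h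
    push_neg at h
    exact hne fun t ht => h t ht
  have hS₁t₀ : S₁ t₀ = 0 := Nat.eq_zero_of_not_pos ht₀₁
  set C : ℝ := ∑ t, d t * Real.log (S₁ t + 1) with hC
  refine ⟨min 1 (Real.exp (-(C+1)/ d t₀)), lt_min one_pos (Real.exp_pos _), ?_⟩
  intro γ hγ hγε
  have hγ1 : γ < 1 := lt_of_lt_of_le hγε (min_le_left _ _)
  have hdt₀ := hd t₀
  have hlog : Real.log γ < -(C+1)/d t₀ := by
    have h2 := lt_of_lt_of_le hγε (min_le_right _ _)
    calc Real.log γ < Real.log (Real.exp (-(C+1)/d t₀)) := Real.log_lt_log hγ h2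
    _ = -(C+1)/d t₀ := Real.log_exp _
  -- rewrite the difference
  have hdiff : G d S₂ γ - G d S₁ γ
      = ∑ t, d t * (Real.log (S₂ t + γ) - Real.log (S₁ t + γ)) := by
    unfold G
    rw [← Finset.sum_sub_distrib]
    refine Finset.sum_congr rfl fun t _ => ?_
    have h1 : ((S₁ t : ℝ) + γ) ≠ 0 := by positivity
    have h2 : ((S₂ t : ℝ) + γ) ≠ 0 := by positivity
    rw [Real.log_div h2 (ne_of_gt hγ), Real.log_div h1 (ne_of_gt hγ)]
    ring
  -- pointwise lower bound off t₀
  have hterm : ∀ t, -(d t * Real.log (S₁ t + 1))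
      ≤ d t * (Real.log (S₂ t + γ) - Real.log (S₁ t + γ)) := by
    intro t
    rcases Nat.eq_zero_or_pos (S₁ t) with h | h
    · rw [h]
      simp only [Nat.cast_zero, zero_add, Real.log_one, mul_zero, neg_zero]
      have : Real.log γ ≤ Real.log (S₂ t + γ) := by
        apply Real.log_le_log hγ
        have : (0:ℝ) ≤ S₂ t := Nat.cast_nonneg _
        linarith
      have := hd t
      nlinarith
    · have hS₂ : 0 < S₂ t := hsub h
      have h1 : (1:ℝ) ≤ (S₂ t : ℝ) + γ := by
        have : (1:ℝ) ≤ (S₂ t : ℝ) := by exact_mod_cast hS₂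
        linarith
      have hlog2 : (0:ℝ) ≤ Real.log ((S₂ t : ℝ) + γ) := Real.log_nonneg h1
      have hlog1 : Real.log ((S₁ t : ℝ) + γ) ≤ Real.log ((S₁ t : ℝ) + 1) := by
        apply Real.log_le_log (by positivity)
        linarith
      have := hd t
      nlinarith
  -- bound at t₀
  have ht₀bound : d t₀ * (0 - Real.log γ)
      ≤ d t₀ * (Real.log (S₂ t₀ + γ) - Real.log (S₁ t₀ + γ)) := by
    rw [hS₁t₀]
    simp only [Nat.cast_zero, zero_add]
    have h1 : (1:ℝ) ≤ (S₂ t₀ : ℝ) + γ := by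
      have : (1:ℝ) ≤ (S₂ t₀ : ℝ) := by exact_mod_cast ht₀₂
      linarith
    have hlog2 : (0:ℝ) ≤ Real.log ((S₂ t₀ : ℝ) + γ) := Real.log_nonneg h1
    nlinarith
  have hCsplit : -C = -(d t₀ * Real.log (S₁ t₀ + 1))
      + ∑ t ∈ Finset.univ.erase t₀, -(d t * Real.log (S₁ t + 1)) := by
    rw [hC, ← Finset.sum_neg_distrib,
      ← Finset.add_sum_erase _ _ (Finset.mem_univ t₀)]
  have hCt₀ : d t₀ * Real.log (S₁ t₀ + 1) = 0 := by
    rw [hS₁t₀]; simp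
  have hsumbound : -C + d t₀ * (0 - Real.log γ) ≤ G d S₂ γ - G d S₁ γ := by
    rw [hdiff, ← Finset.add_sum_erase _ _ (Finset.mem_univ t₀), hCsplit, hCt₀]
    have : ∑ t ∈ Finset.univ.erase t₀, -(d t * Real.log (S₁ t + 1))
        ≤ ∑ t ∈ Finset.univ.erase t₀, d t * (Real.log (S₂ t + γ) - Real.log (S₁ t + γ)) :=
      Finset.sum_le_sum fun t _ => hterm t
    linarith [ht₀bound]
  have hfinal : 0 < -C + d t₀ * (0 - Real.log γ) := by
    have : d t₀ * Real.log γ < d t₀ * (-(C+1)/d t₀) :=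
      mul_lt_mul_of_pos_left hlog hdt₀
    rw [mul_div_cancel₀ _ (ne_of_gt hdt₀)] at this
    linarith
  linarith
end
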